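/- For a point X inside or on the boundary of a triangle ABC, define P(A,X), P(B,X), P(C,X) as the areas of the three regions into which the perpendiculars dropped from X to the three sides (lines BC, CA, AB respectively, extended within the triangle) divide the triangle, where P(V,X) is the area of the region containing vertex V. Then the functions X ↦ P(A,X), X ↦ P(B,X), X ↦ P(C,X) are continuous on the triangle ABC. -/

import Mathlib

open MeasureTheory Real EuclideanGeometry Filter Topology
open scoped RealInnerProductSpace

def tri (A B C : EuclideanSpace ℝ (Fin 2)) : Set (EuclideanSpace ℝ (Fin 2)) :=
  convexHull ℝ {A, B, C}

/-- The region of the Steinhaus partition of triangle `ABC` (determined by the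
perpendiculars through `X` to the side lines) that contains the vertex `A`. -/
def steinRegion (A B C X : EuclideanSpace ℝ (Fin 2)) : Set (EuclideanSpace ℝ (Fin 2)) :=
  tri A B C ∩ {Y | (inner ℝ (Y - X) (B - A) : ℝ) ≤ 0 ∧ (inner ℝ (Y - X) (C - A) : ℝ) ≤ 0}

/-- `sP A B C X` is the area of the Steinhaus region at vertex `A`;
the areas at `B` and `C` are `sP B A C X` and `sP C A B X`. -/
noncomputable def sP (A B C X : EuclideanSpace ℝ (Fin 2)) : ℝ :=
  (volume (steinRegion A B C X)).toReal

noncomputable def triArea (A B C : EuclideanSpace ℝ (Fin 2)) : ℝ :=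
  (volume (tri A B C)).toReal

def Acute (A B C : EuclideanSpace ℝ (Fin 2)) : Prop :=
  ∠ B A C < π/2 ∧ ∠ A B C < π/2 ∧ ∠ B C A < π/2


local notation "E2" => EuclideanSpace ℝ (Fin 2)

lemma null_slice (X₀ u : E2) (hu : u ≠ 0) :
    volume {Y : E2 | (inner ℝ (Y - X₀) u : ℝ) = 0} = 0 := by
  have hset : {Y : E2 | (inner ℝ (Y - X₀) u : ℝ) = 0}
      = (AffineSubspace.mk' X₀ ((ℝ ∙ u)ᗮ) : Set E2) := by
    ext Y
    simp only [Set.mem_setOf_eq, SetLike.mem_coe, AffineSubspace.mem_mk',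
      Submodule.mem_orthogonal_singleton_iff_inner_left]
    rfl
  rw [hset]
  apply Measure.addHaar_affineSubspace
  intro htop
  have : ((ℝ ∙ u)ᗮ : Submodule ℝ E2) = ⊤ := by
    rw [← AffineSubspace.direction_mk' X₀ ((ℝ ∙ u)ᗮ), htop, AffineSubspace.direction_top]
  rw [Submodule.orthogonal_eq_top_iff] at this
  exact hu (by simpa [Submodule.span_singleton_eq_bot] using this)

lemma key (u v : E2) (hu : u ≠ 0) (hv : v ≠ 0) (K : Set E2) (hK : MeasurableSet K)
    (hKfin : volume K ≠ ⊤) :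
    Continuous (fun X : E2 =>
      (volume (K ∩ {Y | (inner ℝ (Y - X) u : ℝ) ≤ 0 ∧ (inner ℝ (Y - X) v : ℝ) ≤ 0})).toReal) := by
  set S : E2 → Set E2 := fun X => K ∩ {Y | (inner ℝ (Y - X) u : ℝ) ≤ 0 ∧ (inner ℝ (Y - X) v : ℝ) ≤ 0}
  have hcl : ∀ (X w : E2), Continuous fun Y : E2 => (inner ℝ (Y - X) w : ℝ) := fun X w =>
    (continuous_id.sub continuous_const).inner continuous_const
  have hSmeas : ∀ X, MeasurableSet (S X) := by
    intro X
    refine hK.inter ?_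
    have h1 : IsClosed {Y : E2 | (inner ℝ (Y - X) u : ℝ) ≤ 0} := isClosed_le (hcl X u) continuous_const
    have h2 : IsClosed {Y : E2 | (inner ℝ (Y - X) v : ℝ) ≤ 0} := isClosed_le (hcl X v) continuous_const
    have : {Y : E2 | (inner ℝ (Y - X) u : ℝ) ≤ 0 ∧ (inner ℝ (Y - X) v : ℝ) ≤ 0}
        = {Y : E2 | (inner ℝ (Y - X) u : ℝ) ≤ 0} ∩ {Y : E2 | (inner ℝ (Y - X) v : ℝ) ≤ 0} := rfl
    rw [this]
    exact (h1.inter h2).measurableSet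
  have hrepr : ∀ X, (volume (S X)).toReal = ∫ Y, (S X).indicator (1 : E2 → ℝ) Y := by
    intro X
    rw [integral_indicator_one (hSmeas X)]; rfl
  rw [continuous_iff_continuousAt]
  intro X₀
  have := hrepr
  unfold ContinuousAt
  show Tendsto (fun X => (volume (S X)).toReal) (𝓝 X₀) (𝓝 (volume (S X₀)).toReal)
  simp only [hrepr]
  apply tendsto_integral_filter_of_dominated_convergence (K.indicator (1 : E2 → ℝ))
  · exact Filter.Eventually.of_forall fun X =>
      aestronglyMeasurable_const.indicator (hSmeas X)
  · refine Filter.Eventually.of_forall fun X => Filter.Eventually.of_forall fun Y => ?_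
    by_cases hY : Y ∈ S X
    · rw [Set.indicator_of_mem hY, Set.indicator_of_mem hY.1]; simp
    · rw [Set.indicator_of_notMem hY]
      simp only [norm_zero]
      exact Set.indicator_nonneg (fun _ _ => zero_le_one) Y
  · rw [integrable_indicator_iff hK]
    exact integrableOn_const hKfin
  · have hnull : volume ({Y : E2 | (inner ℝ (Y - X₀) u : ℝ) = 0}
        ∪ {Y : E2 | (inner ℝ (Y - X₀) v : ℝ) = 0}) = 0 :=
      measure_union_null (null_slice X₀ u hu) (null_slice X₀ v hv)
    filter_upwards [measure_eq_zero_iff_ae_notMem.mp hnull] with Y hY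
    simp only [Set.mem_union, Set.mem_setOf_eq, not_or] at hY
    obtain ⟨hYu, hYv⟩ := hY
    -- eventually, membership of Y in S X agrees with S X₀
    have hcu : Continuous fun X : E2 => (inner ℝ (Y - X) u : ℝ) :=
      (continuous_const.sub continuous_id).inner continuous_const
    have hcv : Continuous fun X : E2 => (inner ℝ (Y - X) v : ℝ) :=
      (continuous_const.sub continuous_id).inner continuous_const
    have hev : ∀ᶠ X in 𝓝 X₀, ((inner ℝ (Y - X) u : ℝ) ≤ 0 ↔ (inner ℝ (Y - X₀) u : ℝ) ≤ 0) := by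
      rcases lt_or_gt_of_ne hYu with h0 | h0
      · filter_upwards [hcu.continuousAt.eventually_lt continuousAt_const h0] with X hX
        · constructor <;> intro <;> [exact h0.le; exact hX.le]
      · filter_upwards [(continuousAt_const (y := (0:ℝ))).eventually_lt hcu.continuousAt h0] with X hX
        constructor <;> intro hh <;> [exact absurd hh (not_le.mpr hX); exact absurd hh (not_le.mpr h0)]
    have hev' : ∀ᶠ X in 𝓝 X₀, ((inner ℝ (Y - X) v : ℝ) ≤ 0 ↔ (inner ℝ (Y - X₀) v : ℝ) ≤ 0) := by
      rcases lt_or_gt_of_ne hYv with h0 | h0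
      · filter_upwards [hcv.continuousAt.eventually_lt continuousAt_const h0] with X hX
        · constructor <;> intro <;> [exact h0.le; exact hX.le]
      · filter_upwards [(continuousAt_const (y := (0:ℝ))).eventually_lt hcv.continuousAt h0] with X hX
        constructor <;> intro hh <;> [exact absurd hh (not_le.mpr hX); exact absurd hh (not_le.mpr h0)]
    have : ∀ᶠ X in 𝓝 X₀, (S X₀).indicator (1 : E2 → ℝ) Y = (S X).indicator (1 : E2 → ℝ) Y := by
      filter_upwards [hev, hev'] with X h1 h2
      have : Y ∈ S X ↔ Y ∈ S X₀ := by
        simp only [S, Set.mem_inter_iff, Set.mem_setOf_eq, h1, h2]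
      by_cases hm : Y ∈ S X₀
      · rw [Set.indicator_of_mem (this.mpr hm), Set.indicator_of_mem hm]
      · rw [Set.indicator_of_notMem (fun c => hm (this.mp c)), Set.indicator_of_notMem hm]
    exact Filter.Tendsto.congr' this tendsto_const_nhds

theorem stein_areas_continuousOn (A B C : EuclideanSpace ℝ (Fin 2))
    (h : AffineIndependent ℝ ![A, B, C]) :
    ContinuousOn (fun X => sP A B C X) (tri A B C) ∧
    ContinuousOn (fun X => sP B A C X) (tri A B C) ∧
    ContinuousOn (fun X => sP C A B X) (tri A B C) := by
  have hAB : A ≠ B := by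
    have := h.injective.ne (by decide : (0:Fin 3) ≠ 1)
    simpa using this
  have hAC : A ≠ C := by
    have := h.injective.ne (by decide : (0:Fin 3) ≠ 2)
    simpa using this
  have hBC : B ≠ C := by
    have := h.injective.ne (by decide : (1:Fin 3) ≠ 2)
    simpa using this
  have hKcomp : IsCompact (tri A B C) := by
    exact (Set.toFinite {A, B, C}).isCompact_convexHull ℝ
  have hK : MeasurableSet (tri A B C) := hKcomp.isClosed.measurableSet
  have hKfin : volume (tri A B C) ≠ ⊤ := hKcomp.measure_lt_top.ne
  have htriBAC : tri B A C = tri A B C := by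
    unfold tri; rw [Set.insert_comm]
  have htriCAB : tri C A B = tri A B C := by
    unfold tri
    have : ({C, A, B} : Set E2) = {A, B, C} := by
      ext x; simp; tauto
    rw [this]
  refine ⟨?_, ?_, ?_⟩
  · exact (key (B - A) (C - A) (sub_ne_zero.mpr hAB.symm) (sub_ne_zero.mpr hAC.symm)
      (tri A B C) hK hKfin).continuousOn
  · have : (fun X => sP B A C X) = fun X =>
        (volume ((tri A B C) ∩ {Y : E2 | (inner ℝ (Y - X) (A - B) : ℝ) ≤ 0 ∧
          (inner ℝ (Y - X) (C - B) : ℝ) ≤ 0})).toReal := by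
      funext X; unfold sP steinRegion; rw [htriBAC]
    rw [this]
    exact (key (A - B) (C - B) (sub_ne_zero.mpr hAB) (sub_ne_zero.mpr hBC.symm)
      (tri A B C) hK hKfin).continuousOn
  · have : (fun X => sP C A B X) = fun X =>
        (volume ((tri A B C) ∩ {Y : E2 | (inner ℝ (Y - X) (A - C) : ℝ) ≤ 0 ∧
          (inner ℝ (Y - X) (B - C) : ℝ) ≤ 0})).toReal := by
      funext X; unfold sP steinRegion; rw [htriCAB]
    rw [this]
    exact (key (A - C) (B - C) (sub_ne_zero.mpr hAC) (sub_ne_zero.mpr hBC)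
      (tri A B C) hK hKfin).continuousOn
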